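/- Let Σ = {a,b,c} and let A_{//a//b} be the TDSTA over Σ with states Q = {q₀,q₁}, top states 𝒯 = {q₀}, bottom states ℬ = {q₀,q₁}, selecting configurations 𝒮 = {(q₁,b)}, and transitions (q₀,{a},q₁,q₀), (q₀,{b,c},q₀,q₀), (q₁,{a,b,c},q₁,q₁). Then there is no bottom-up deterministic selecting tree automaton (BDSTA) B over Σ with B ≡ A_{//a//b}. -/

import Mathlib

/-- Binary trees over an alphabet `σ`: `leaf` is the leaf symbol `#`. -/
inductive BTree (σ : Type) : Type where
  | leaf : BTree σ
  | node : σ → BTree σ → BTree σ → BTree σ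

namespace BTree

/-- `mem π t` : the node `π` (a sequence over `{1,2}`, here `Bool` with
`false` = first child, `true` = second child) belongs to `dom t`. -/
def mem {σ : Type} : List Bool → BTree σ → Prop
  | [], _ => True
  | _ :: _, .leaf => False
  | false :: π, .node _ t1 _ => mem π t1
  | true :: π, .node _ _ t2 => mem π t2

/-- The label of `t` at node `π`: `some l` if `t(π) = l ∈ σ`,
and `none` if `t(π) = #` or `π ∉ dom t`. -/
def labelAt {σ : Type} : BTree σ → List Bool → Option σ
  | .leaf, _ => none
  | .node l _ _, [] => some l
  | .node _ t1 _, false :: π => labelAt t1 π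
  | .node _ _ t2, true :: π => labelAt t2 π

end BTree

/-- A selecting tree automaton (STA) over alphabet `σ` with states `Q`:
top states, bottom states, selecting configurations and transitions
`(q, L, q₁, q₂)` with `L ⊆ σ`. -/
structure STA (σ Q : Type) where
  top : Set Q
  bot : Set Q
  sel : Set (Q × σ)
  delta : Set (Q × Set σ × Q × Q)

namespace STA

variable {σ Q : Type}

/-- Destination states: `δ(q,l) = {(q',q'') | ∃ L, l ∈ L ∧ (q,L,q',q'') ∈ δ}`. -/
def dst (A : STA σ Q) (q : Q) (l : σ) : Set (Q × Q) :=
  {p | ∃ L, l ∈ L ∧ (q, L, p.1, p.2) ∈ A.delta}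

/-- Source states: `δ(q₁,q₂,l) = {q | ∃ L, l ∈ L ∧ (q,L,q₁,q₂) ∈ δ}`. -/
def src (A : STA σ Q) (q1 q2 : Q) (l : σ) : Set Q :=
  {q | ∃ L, l ∈ L ∧ (q, L, q1, q2) ∈ A.delta}

/-- `R` is a run of `A` over `t`. -/
def IsRun (A : STA σ Q) (t : BTree σ) (R : List Bool → Q) : Prop :=
  ∀ π l, t.labelAt π = some l →
    R π ∈ A.src (R (π ++ [false])) (R (π ++ [true])) l

/-- `R` is an accepting run of `A` over `t`. -/
def Accepting (A : STA σ Q) (t : BTree σ) (R : List Bool → Q) : Prop :=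
  A.IsRun t R ∧ R [] ∈ A.top ∧
    ∀ π, BTree.mem π t → t.labelAt π = none → R π ∈ A.bot

/-- The language of `A`. -/
def lang (A : STA σ Q) : Set (BTree σ) := {t | ∃ R, A.Accepting t R}

/-- The set of nodes of `t` selected by `A`. -/
def selected (A : STA σ Q) (t : BTree σ) : Set (List Bool) :=
  {π | ∃ R l, A.Accepting t R ∧ t.labelAt π = some l ∧ (R π, l) ∈ A.sel}

/-- `A` is top-down deterministic. -/
def TDDet (A : STA σ Q) : Prop :=
  (∃ q, A.top = {q}) ∧ ∀ q l, ∃ p, A.dst q l = {p}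

/-- `A` is bottom-up deterministic. -/
def BUDet (A : STA σ Q) : Prop :=
  (∃ q, A.bot = {q}) ∧ ∀ q1 q2 l, ∃ q, A.src q1 q2 l = {q}

/-- `A` is top-down complete. -/
def TDComplete (A : STA σ Q) : Prop := ∀ q l, (A.dst q l).Nonempty

/-- `A` is bottom-up complete. -/
def BUComplete (A : STA σ Q) : Prop := ∀ q1 q2 l, (A.src q1 q2 l).Nonempty

/-- One-step reachability between states. -/
def step (A : STA σ Q) (p p' : Q) : Prop :=
  ∃ L q1 q2, (p, L, q1, q2) ∈ A.delta ∧ (p' = q1 ∨ p' = q2)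

/-- Reachability between states. -/
def reach (A : STA σ Q) : Q → Q → Prop := Relation.ReflTransGen A.step

/-- `A[q]` : the restriction of `A` to the state `q`
(top states become `{q}` and everything is restricted to states reachable from `q`). -/
def restrict (A : STA σ Q) (q : Q) : STA σ Q where
  top := {q}
  bot := {p | p ∈ A.bot ∧ A.reach q p}
  sel := {ps | ps ∈ A.sel ∧ A.reach q ps.1}
  delta := {tr | tr ∈ A.delta ∧ A.reach q tr.1}

/-- A state is non-changing if `δ(q,l) = {(q,q)}` for every label. -/
def NonChanging (A : STA σ Q) (q : Q) : Prop := ∀ l, A.dst q l = {(q, q)}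

/-- Top-down universal state. -/
def TDUniversal (A : STA σ Q) (q : Q) : Prop := A.NonChanging q ∧ q ∈ A.bot

/-- Top-down sink state. -/
def TDSink (A : STA σ Q) (q : Q) : Prop := A.NonChanging q ∧ q ∉ A.bot

end STA

/-- Equivalence of STAs: same language and same selected nodes on every tree. -/
def STAEquiv {σ Q Q' : Type} (A : STA σ Q) (B : STA σ Q') : Prop :=
  A.lang = B.lang ∧ ∀ t, A.selected t = B.selected t

/-- `A` is a minimal top-down complete TDSTA: no equivalent top-down complete
TDSTA has strictly fewer states. -/
def MinimalTD {σ Q : Type} (A : STA σ Q) : Prop :=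
  A.TDDet ∧ A.TDComplete ∧
    ∀ (Q' : Type) [Finite Q'], ∀ B : STA σ Q',
      B.TDDet → B.TDComplete → STAEquiv B A → Nat.card Q ≤ Nat.card Q'

/-- `A` is a minimal bottom-up complete BDSTA. -/
def MinimalBU {σ Q : Type} (A : STA σ Q) : Prop :=
  A.BUDet ∧ A.BUComplete ∧
    ∀ (Q' : Type) [Finite Q'], ∀ B : STA σ Q',
      B.BUDet → B.BUComplete → STAEquiv B A → Nat.card Q ≤ Nat.card Q'

/-- `B` behaves like `A_⊤`: it accepts every tree and selects no node. -/
def IsTopSTA {σ Q : Type} (B : STA σ Q) : Prop :=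
  B.lang = Set.univ ∧ ∀ t, B.selected t = ∅

/-- The three-letter alphabet `Σ = {a, b, c}`. -/
inductive ABC : Type where
  | a | b | c
deriving DecidableEq

instance : Fintype ABC where
  elems := {ABC.a, ABC.b, ABC.c}
  complete := by
    intro x
    cases x <;> simp

/-- The TDSTA `A_{//a//b}` (states `q₀ = false`, `q₁ = true`). -/
def Aab : STA ABC Bool where
  top := {false}
  bot := Set.univ
  sel := {(true, ABC.b)}
  delta := {(false, ({ABC.a} : Set ABC), true, false),
            (false, ({ABC.b, ABC.c} : Set ABC), false, false),
            (true, (Set.univ : Set ABC), true, true)}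


namespace Stmt2Aux

open BTree

/-- The subtree `b(#,#)`. -/
def s0 : BTree ABC := .node .b .leaf .leaf
/-- `t1 = a(b(#,#),#)`. -/
def t1 : BTree ABC := .node .a s0 .leaf
/-- `t2 = b(b(#,#),#)`. -/
def t2 : BTree ABC := .node .b s0 .leaf

/-- Run of `Aab` on `t1`. -/
def R1 : List Bool → Bool := fun π => match π with
  | false :: _ => true
  | _ => false

lemma aab_acc_t1 : Aab.Accepting t1 R1 := by
  refine ⟨?_, ?_, ?_⟩
  · intro π l h
    match π with
    | [] =>
      have : l = ABC.a := (Option.some.inj h).symm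
      subst this
      exact ⟨{ABC.a}, by simp, by simp [Aab, R1]⟩
    | [false] =>
      have : l = ABC.b := (Option.some.inj h).symm
      subst this
      exact ⟨Set.univ, by simp, by simp [Aab, R1]⟩
    | [true] => simp [t1, BTree.labelAt] at h
    | false :: x :: π' =>
      cases x <;> simp [t1, s0, BTree.labelAt] at h
    | true :: x :: π' =>
      simp [t1, BTree.labelAt] at h
  · simp [Aab, R1]
  · intro π _ _; simp [Aab]

lemma aab_sel_t1 : [false] ∈ Aab.selected t1 :=
  ⟨R1, ABC.b, aab_acc_t1, rfl, by simp [Aab, R1]⟩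

lemma aab_lang_t2 : t2 ∈ Aab.lang := by
  refine ⟨fun _ => false, ?_, ?_, ?_⟩
  · intro π l h
    match π with
    | [] =>
      have : l = ABC.b := (Option.some.inj h).symm
      subst this
      exact ⟨{ABC.b, ABC.c}, by simp, by simp [Aab]⟩
    | [false] =>
      have : l = ABC.b := (Option.some.inj h).symm
      subst this
      exact ⟨{ABC.b, ABC.c}, by simp, by simp [Aab]⟩
    | [true] => simp [t2, BTree.labelAt] at h
    | false :: x :: π' =>
      cases x <;> simp [t2, s0, BTree.labelAt] at h
    | true :: x :: π' =>
      simp [t2, BTree.labelAt] at h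
  · simp [Aab]
  · intro π _ _; simp [Aab]

lemma aab_not_sel_t2 : [false] ∉ Aab.selected t2 := by
  rintro ⟨R, l, ⟨hrun, htop, -⟩, hlab, hsel⟩
  have hl : l = ABC.b := (Option.some.inj hlab).symm
  subst hl
  have hRe : R [] = false := by simpa [Aab] using htop
  have h0 : R [] ∈ Aab.src (R [false]) (R [true]) ABC.b :=
    hrun [] ABC.b (by simp [t2, BTree.labelAt])
  obtain ⟨L, hbL, hmem⟩ := h0
  have hRf : R [false] = false := by
    rw [hRe] at hmem
    simp only [Aab, Set.mem_insert_iff, Set.mem_singleton_iff, Prod.mk.injEq] at hmem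
    rcases hmem with ⟨-, hL, h1, -⟩ | ⟨-, hL, h1, -⟩ | ⟨h, -⟩
    · subst hL; simp at hbL
    · exact h1
    · exact absurd h (by simp)
  have : R [false] = true := by simpa [Aab] using hsel
  rw [hRf] at this; exact absurd this (by simp)

end Stmt2Aux

/-- no BDSTA is equivalent to `A_{//a//b}`. -/
theorem stmt2 :
    ∀ (Q' : Type) [Finite Q'], ∀ B : STA ABC Q', B.BUDet → ¬ STAEquiv B Aab := by
  intro Q' _ B hBU ⟨hlang, hsel⟩
  open Stmt2Aux in
  obtain ⟨⟨qb, hbot⟩, hdet⟩ := hBU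
  obtain ⟨q, hq⟩ := hdet qb qb ABC.b
  -- forced state at [false] in any accepting run of B over node x s0 leaf
  have forced : ∀ (x : ABC) (R : List Bool → Q'),
      B.Accepting (.node x s0 .leaf) R → R [false] = q := by
    rintro x R ⟨hrun, -, hbotc⟩
    have hff : R [false, false] = qb := by
      have := hbotc [false, false] (by trivial) rfl
      rw [hbot] at this; exact this
    have hft : R [false, true] = qb := by
      have := hbotc [false, true] (by trivial) rfl
      rw [hbot] at this; exact this
    have h := hrun [false] ABC.b (by simp [s0, BTree.labelAt])
    have h' : R [false] ∈ B.src qb qb ABC.b := by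
      simpa [List.append, hff, hft] using h
    rw [hq] at h'; exact h'
  -- (q, b) ∈ B.sel, from selection on t1
  have hsel1 : [false] ∈ B.selected t1 := by rw [hsel]; exact aab_sel_t1
  obtain ⟨R, l, hacc, hlab, hmem⟩ := hsel1
  have hl : l = ABC.b := (Option.some.inj hlab).symm
  subst hl
  have hqsel : (q, ABC.b) ∈ B.sel := by
    have := forced ABC.a R hacc
    rwa [this] at hmem
  -- t2 accepted by B, hence [false] selected in t2 by B
  have ht2 : t2 ∈ B.lang := by rw [hlang]; exact aab_lang_t2
  obtain ⟨R', hacc'⟩ := ht2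
  have : [false] ∈ B.selected t2 := by
    refine ⟨R', ABC.b, hacc', rfl, ?_⟩
    rw [forced ABC.b R' hacc']; exact hqsel
  rw [hsel] at this
  exact aab_not_sel_t2 this
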